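/- Suppose a projection step yields ‖P(V - L*)‖ ≤ δ₁‖V - L*‖ + c where δ₁ ∈ [0,1), c ≥ 0, and additionally ‖V - L*‖² = ‖P(V - L*)‖² + r² where r = ‖P^⊥(V - L*)‖. Then ‖V - L*‖ ≤ r/√(1-δ₁²) + (1+2δ₁)/(1-δ₁²) · c. -/

import Mathlib

lemma quad_aux (a p r δ c : ℝ) (ha : 0 ≤ a) (hp : 0 ≤ p) (hr : 0 ≤ r)
    (hδ0 : 0 ≤ δ) (hδ1 : δ < 1) (hc : 0 ≤ c)
    (hpyth : a ^ 2 = p ^ 2 + r ^ 2) (hproj : p ≤ δ * a + c) :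
    a ≤ r / Real.sqrt (1 - δ ^ 2) + (1 + 2 * δ) / (1 - δ ^ 2) * c := by
  have hd : 0 < 1 - δ ^ 2 := by nlinarith
  set s := Real.sqrt (1 - δ ^ 2) with hs
  have hs2 : s ^ 2 = 1 - δ ^ 2 := Real.sq_sqrt hd.le
  have hspos : 0 < s := Real.sqrt_pos.mpr hd
  -- quadratic inequality
  have hq : (1 - δ ^ 2) * a ^ 2 ≤ 2 * δ * c * a + c ^ 2 + r ^ 2 := by nlinarith
  set t := (1 - δ ^ 2) * a with ht
  have key : t ≤ s * r + (1 + δ) * c := by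
    rcases le_or_gt (t - δ * c) 0 with h | h
    · nlinarith
    · have h1 : (t - δ * c) ^ 2 ≤ (c + s * r) ^ 2 := by
        nlinarith [mul_le_mul_of_nonneg_left hq hd.le,
          mul_nonneg hc (mul_nonneg hspos.le hr)]
      nlinarith [sq_nonneg (t - δ * c + c + s * r), mul_nonneg hspos.le hr,
        mul_nonneg hc (mul_nonneg hspos.le hr)]
  have : (1 - δ ^ 2) * a ≤ (1 - δ ^ 2) * (r / s + (1 + 2 * δ) / (1 - δ ^ 2) * c) := by
    have hrs : r / s = s * r / (1 - δ ^ 2) := by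
      rw [div_eq_div_iff hspos.ne' hd.ne']
      nlinarith
    rw [hrs]
    field_simp
    nlinarith
  exact le_of_mul_le_mul_left this hd

theorem stmt_16 {F : Type*} [NormedAddCommGroup F] [InnerProductSpace ℝ F]
    (K : Submodule ℝ F) [CompleteSpace K] (V Lstar : F)
    (δ₁ c : ℝ) (hδ0 : 0 ≤ δ₁) (hδ1 : δ₁ < 1) (hc : 0 ≤ c)
    (hproj : ‖(K.orthogonalProjectionOnto (V - Lstar) : F)‖ ≤ δ₁ * ‖V - Lstar‖ + c) :
    ‖V - Lstar‖ ≤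
      ‖(V - Lstar) - (K.orthogonalProjectionOnto (V - Lstar) : F)‖ / Real.sqrt (1 - δ₁ ^ 2)
      + (1 + 2 * δ₁) / (1 - δ₁ ^ 2) * c := by
  set x := V - Lstar
  set P := (K.orthogonalProjectionOnto x : F)
  have hortho : (inner ℝ P (x - P) : ℝ) = 0 := by
    apply Submodule.inner_right_of_mem_orthogonal (K.orthogonalProjectionOnto x).2
    exact K.sub_starProjection_mem_orthogonal x
  have hpyth : ‖x‖ ^ 2 = ‖P‖ ^ 2 + ‖x - P‖ ^ 2 := by
    have h2 := norm_add_sq_real P (x - P)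
    rw [hortho] at h2
    have h3 : P + (x - P) = x := by abel
    rw [h3] at h2
    linarith
  exact quad_aux ‖x‖ ‖P‖ ‖x - P‖ δ₁ c (norm_nonneg _) (norm_nonneg _) (norm_nonneg _)
    hδ0 hδ1 hc hpyth hproj
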